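/- For every integer d ≥ 0, the Euler characteristic of every d-sphere equals 1 + (−1)^d. -/

import Mathlib

attribute [local instance] Classical.propDecidable

noncomputable section

/-- A finite simple graph on a vertex type `V`: a finite vertex set together with a
symmetric, irreflexive adjacency relation supported on the vertex set. -/
structure FSGraph (V : Type) where
  verts : Finset V
  Adj : V → V → Prop
  symm : ∀ {a b}, Adj a b → Adj b a
  loopless : ∀ a, ¬ Adj a a
  supp : ∀ {a b}, Adj a b → a ∈ verts ∧ b ∈ verts

namespace FSGraph

variable {V : Type}

/-- The subgraph induced by the set of vertices satisfying `P`. -/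
def induce (G : FSGraph V) (P : V → Prop) : FSGraph V where
  verts := G.verts.filter P
  Adj a b := G.Adj a b ∧ P a ∧ P b
  symm h := ⟨G.symm h.1, h.2.2, h.2.1⟩
  loopless a h := G.loopless a h.1
  supp h := ⟨Finset.mem_filter.mpr ⟨(G.supp h.1).1, h.2.1⟩,
             Finset.mem_filter.mpr ⟨(G.supp h.1).2, h.2.2⟩⟩

/-- The unit sphere `S(x)`: the subgraph induced by the neighbours of `x`. -/
def sphere (G : FSGraph V) (x : V) : FSGraph V := G.induce (fun y => G.Adj x y)

/-- `G - x`: the subgraph induced by all vertices different from `x`. -/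
def remove (G : FSGraph V) (x : V) : FSGraph V := G.induce (fun y => y ≠ x)

/-- Contractibility (in the sense of Evako/Knill): the one-point graph `K₁` is
contractible, and a graph is contractible if some vertex `x` has both `S(x)` and
`G - x` contractible.  The empty graph is not contractible. -/
inductive Contractible : FSGraph V → Prop
  | single (G : FSGraph V) (x : V) (h : G.verts = {x}) : Contractible G
  | step (G : FSGraph V) (x : V) (hx : x ∈ G.verts)
      (hS : Contractible (G.sphere x)) (hR : Contractible (G.remove x)) :
      Contractible G

/-- `IsSphere d G`: `G` is a `d`-sphere.  The empty graph is the `(-1)`-sphere; for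
`d ≥ 0`, a `d`-sphere is a nonempty graph all of whose unit spheres are
`(d-1)`-spheres (i.e. a `d`-graph) which becomes contractible after removing some
vertex. -/
inductive IsSphere : ℤ → FSGraph V → Prop
  | empty (G : FSGraph V) (h : G.verts = ∅) : IsSphere (-1) G
  | succ (d : ℤ) (G : FSGraph V) (hd : 0 ≤ d) (hne : G.verts.Nonempty)
      (hunit : ∀ x ∈ G.verts, IsSphere (d - 1) (G.sphere x))
      (hpunct : ∃ x ∈ G.verts, Contractible (G.remove x)) :
      IsSphere d G

/-- A `d`-graph: a nonempty graph all of whose unit spheres are `(d-1)`-spheres. -/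
def IsDGraph (d : ℤ) (G : FSGraph V) : Prop :=
  G.verts.Nonempty ∧ ∀ x ∈ G.verts, IsSphere (d - 1) (G.sphere x)

/-- A `d`-ball: a graph of the form `G - x` with `G` a `d`-sphere and `x` a vertex. -/
def IsBall (d : ℤ) (B : FSGraph V) : Prop :=
  ∃ (G : FSGraph V) (x : V), IsSphere d G ∧ x ∈ G.verts ∧ B = G.remove x

/-- `f` is locally injective (a coloring): adjacent vertices get different values. -/
def LocallyInjective (G : FSGraph V) (f : V → ℝ) : Prop :=
  ∀ a b, G.Adj a b → f a ≠ f b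

/-- `S_f^-(x)`: the subgraph of `S(x)` induced by `{y ∈ S(x) : f y < f x}`. -/
def subSphere (G : FSGraph V) (f : V → ℝ) (x : V) : FSGraph V :=
  (G.sphere x).induce (fun y => f y < f x)

/-- `S_f^+(x)`: the subgraph of `S(x)` induced by `{y ∈ S(x) : f y > f x}`. -/
def supSphere (G : FSGraph V) (f : V → ℝ) (x : V) : FSGraph V :=
  (G.sphere x).induce (fun y => f x < f y)

/-- `x` is a critical point of `f` if at least one of `S_f^-(x)`, `S_f^+(x)` is
not contractible. -/
def IsCritical (G : FSGraph V) (f : V → ℝ) (x : V) : Prop :=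
  ¬ Contractible (G.subSphere f x) ∨ ¬ Contractible (G.supSphere f x)

/-- `f` has exactly two critical points on the vertex set of `G`. -/
def ExactlyTwoCriticalPoints (G : FSGraph V) (f : V → ℝ) : Prop :=
  ∃ a b, a ∈ G.verts ∧ b ∈ G.verts ∧ a ≠ b ∧
    G.IsCritical f a ∧ G.IsCritical f b ∧
    ∀ x ∈ G.verts, G.IsCritical f x → x = a ∨ x = b

/-- A simplex of `G`: a nonempty complete subgraph, given by its vertex set. -/
def IsSimplex (G : FSGraph V) (s : Finset V) : Prop :=
  s.Nonempty ∧ s ⊆ G.verts ∧ ∀ a ∈ s, ∀ b ∈ s, a ≠ b → G.Adj a b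

/-- The finite set of simplices (nonempty complete subgraphs) of `G`. -/
def simplices (G : FSGraph V) : Finset (Finset V) :=
  G.verts.powerset.filter (fun s => G.IsSimplex s)

/-- The Barycentric refinement `G'`: vertices are the simplices of `G`, two simplices
being adjacent when one is a proper subset of the other. -/
def barycentric (G : FSGraph V) : FSGraph (Finset V) where
  verts := G.simplices
  Adj s t := G.IsSimplex s ∧ G.IsSimplex t ∧ (s ⊂ t ∨ t ⊂ s)
  symm h := ⟨h.2.1, h.1, h.2.2.symm⟩
  loopless s h := by
    rcases h.2.2 with h' | h' <;> exact ssubset_irrefl s h'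
  supp {s t} h :=
    ⟨Finset.mem_filter.mpr ⟨Finset.mem_powerset.mpr h.1.2.1, h.1⟩,
     Finset.mem_filter.mpr ⟨Finset.mem_powerset.mpr h.2.1.2.1, h.2.1⟩⟩

/-- The level surface `{f = c}` in the Barycentric refinement `G'`: the subgraph of
`G'` induced by the simplices on which `f - c` takes both positive and negative
values. -/
def levelSurface (G : FSGraph V) (f : V → ℝ) (c : ℝ) : FSGraph (Finset V) :=
  G.barycentric.induce (fun s => (∃ a ∈ s, f a < c) ∧ (∃ b ∈ s, c < f b))

/-- `{f ≤ c}` in `G'`: the subgraph of `G'` induced by the simplices on which `f < c`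
everywhere, together with those on which `f - c` takes both signs. -/
def subLevel (G : FSGraph V) (f : V → ℝ) (c : ℝ) : FSGraph (Finset V) :=
  G.barycentric.induce
    (fun s => (∀ a ∈ s, f a < c) ∨ ((∃ a ∈ s, f a < c) ∧ (∃ b ∈ s, c < f b)))

/-- `{f ≥ c}` in `G'`: the subgraph of `G'` induced by the simplices on which `f > c`
everywhere, together with those on which `f - c` takes both signs. -/
def supLevel (G : FSGraph V) (f : V → ℝ) (c : ℝ) : FSGraph (Finset V) :=
  G.barycentric.induce
    (fun s => (∀ a ∈ s, c < f a) ∨ ((∃ a ∈ s, f a < c) ∧ (∃ b ∈ s, c < f b)))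

/-- The center manifold `B_f(x) = {f = f x}` inside the Barycentric refinement
`S(x)'` of the unit sphere `S(x)`. -/
def centerManifold (G : FSGraph V) (f : V → ℝ) (x : V) : FSGraph (Finset V) :=
  (G.sphere x).levelSurface f (f x)

/-- Euler characteristic: `χ(G) = Σ_k (-1)^k c_k(G)` where `c_k(G)` counts the
complete subgraphs with `k+1` vertices; equivalently the sum of `(-1)^(|s|-1)` over
all simplices `s`. -/
def euler (G : FSGraph V) : ℤ :=
  ∑ s ∈ G.simplices, (-1 : ℤ) ^ (s.card - 1)

lemma mem_sphere_verts {G : FSGraph V} {x a : V} :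
    a ∈ (G.sphere x).verts ↔ a ∈ G.verts ∧ G.Adj x a := Finset.mem_filter

lemma not_mem_sphere_verts (G : FSGraph V) (x : V) : x ∉ (G.sphere x).verts := by
  intro h
  exact G.loopless x (mem_sphere_verts.mp h).2

lemma mem_remove_verts {G : FSGraph V} {x a : V} :
    a ∈ (G.remove x).verts ↔ a ∈ G.verts ∧ a ≠ x := by
  simp [remove, induce]

lemma isSimplex_remove {G : FSGraph V} {x : V} {s : Finset V} :
    (G.remove x).IsSimplex s ↔ G.IsSimplex s ∧ x ∉ s := by
  constructor
  · rintro ⟨hne, hsub, hadj⟩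
    refine ⟨⟨hne, fun a ha => (mem_remove_verts.mp (hsub ha)).1,
      fun a ha b hb hab => (hadj a ha b hb hab).1⟩, fun hxs => ?_⟩
    exact (mem_remove_verts.mp (hsub hxs)).2 rfl
  · rintro ⟨⟨hne, hsub, hadj⟩, hx⟩
    exact ⟨hne, fun a ha => mem_remove_verts.mpr ⟨hsub ha, fun h => hx (h ▸ ha)⟩,
      fun a ha b hb hab => ⟨hadj a ha b hb hab, fun h => hx (h ▸ ha), fun h => hx (h ▸ hb)⟩⟩

lemma mem_simplices {G : FSGraph V} {s : Finset V} :
    s ∈ G.simplices ↔ G.IsSimplex s := by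
  simp only [simplices, Finset.mem_filter, Finset.mem_powerset]
  exact ⟨fun h => h.2, fun h => ⟨h.2.1, h⟩⟩

lemma simplices_remove (G : FSGraph V) (x : V) :
    (G.remove x).simplices = G.simplices.filter (fun s => x ∉ s) := by
  ext s
  simp only [mem_simplices, Finset.mem_filter, isSimplex_remove, mem_simplices]

lemma empty_not_mem_simplices (G : FSGraph V) : (∅ : Finset V) ∉ G.simplices := by
  intro h
  exact Finset.not_nonempty_empty (mem_simplices.mp h).1

/-- Simplices containing `x` correspond to `insert x t` for `t = ∅` or a simplex of
the unit sphere `S(x)`. -/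
lemma erase_mem_simplices {G : FSGraph V} {x : V} {s : Finset V}
    (hs : G.IsSimplex s) (hxs : x ∈ s) :
    s.erase x ∈ insert (∅ : Finset V) (G.sphere x).simplices := by
  rcases eq_or_ne (s.erase x) ∅ with h | h
  · simp [h]
  · refine Finset.mem_insert.mpr (Or.inr (mem_simplices.mpr ?_))
    refine ⟨Finset.nonempty_iff_ne_empty.mpr h, ?_, ?_⟩
    · intro a ha
      have hax : a ≠ x := Finset.ne_of_mem_erase ha
      have has : a ∈ s := Finset.mem_of_mem_erase ha
      exact mem_sphere_verts.mpr ⟨hs.2.1 has, hs.2.2 x hxs a has (Ne.symm hax)⟩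
    · intro a ha b hb hab
      have has : a ∈ s := Finset.mem_of_mem_erase ha
      have hbs : b ∈ s := Finset.mem_of_mem_erase hb
      exact ⟨hs.2.2 a has b hbs hab,
        hs.2.2 x hxs a has (Ne.symm (Finset.ne_of_mem_erase ha)),
        hs.2.2 x hxs b hbs (Ne.symm (Finset.ne_of_mem_erase hb))⟩

lemma insert_mem_simplices {G : FSGraph V} {x : V} (hx : x ∈ G.verts) {t : Finset V}
    (ht : t ∈ insert (∅ : Finset V) (G.sphere x).simplices) :
    G.IsSimplex (insert x t) ∧ x ∉ t := by
  rcases Finset.mem_insert.mp ht with h | h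
  · subst h
    refine ⟨⟨⟨x, Finset.mem_insert_self x ∅⟩, ?_, ?_⟩, Finset.notMem_empty x⟩
    · intro a ha
      rcases Finset.mem_insert.mp ha with rfl | ha
      · exact hx
      · exact absurd ha (Finset.notMem_empty a)
    · intro a ha b hb hab
      rcases Finset.mem_insert.mp ha with rfl | ha
      · rcases Finset.mem_insert.mp hb with rfl | hb
        · exact absurd rfl hab
        · exact absurd hb (Finset.notMem_empty b)
      · exact absurd ha (Finset.notMem_empty a)
  · have ht' := mem_simplices.mp h
    have hxt : x ∉ t := fun hxt => not_mem_sphere_verts G x (ht'.2.1 hxt)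
    refine ⟨⟨⟨x, Finset.mem_insert_self x t⟩, ?_, ?_⟩, hxt⟩
    · intro a ha
      rcases Finset.mem_insert.mp ha with rfl | ha
      · exact hx
      · exact (mem_sphere_verts.mp (ht'.2.1 ha)).1
    · intro a ha b hb hab
      rcases Finset.mem_insert.mp ha with hax | ha
      · rcases Finset.mem_insert.mp hb with hbx | hb
        · exact absurd (hax.trans hbx.symm) hab
        · rw [hax]
          exact (mem_sphere_verts.mp (ht'.2.1 hb)).2
      · rcases Finset.mem_insert.mp hb with hbx | hb
        · rw [hbx]
          exact G.symm (mem_sphere_verts.mp (ht'.2.1 ha)).2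
        · exact (ht'.2.2 a ha b hb hab).1

/-- The key identity: `χ(G) = χ(G - x) + 1 - χ(S(x))` for any vertex `x`. -/
lemma euler_eq_remove_add_one_sub_sphere (G : FSGraph V) {x : V} (hx : x ∈ G.verts) :
    G.euler = (G.remove x).euler + 1 - (G.sphere x).euler := by
  classical
  have hsplit :
      G.euler = (∑ s ∈ G.simplices.filter (fun s => x ∈ s), (-1 : ℤ) ^ (s.card - 1))
        + ∑ s ∈ G.simplices.filter (fun s => x ∉ s), (-1 : ℤ) ^ (s.card - 1) :=
    (Finset.sum_filter_add_sum_filter_not _ _ _).symm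
  have hrem : (∑ s ∈ G.simplices.filter (fun s => x ∉ s), (-1 : ℤ) ^ (s.card - 1))
      = (G.remove x).euler := by
    rw [euler, simplices_remove]
  have hbij : (∑ s ∈ G.simplices.filter (fun s => x ∈ s), (-1 : ℤ) ^ (s.card - 1))
      = ∑ t ∈ insert (∅ : Finset V) (G.sphere x).simplices, (-1 : ℤ) ^ t.card := by
    refine Finset.sum_bij' (fun s _ => s.erase x) (fun t _ => insert x t) ?_ ?_ ?_ ?_ ?_
    · intro s hs
      have hs' := Finset.mem_filter.mp hs
      exact erase_mem_simplices (mem_simplices.mp hs'.1) hs'.2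
    · intro t ht
      have h := insert_mem_simplices hx ht
      exact Finset.mem_filter.mpr ⟨mem_simplices.mpr h.1, Finset.mem_insert_self x t⟩
    · intro s hs
      exact Finset.insert_erase (Finset.mem_filter.mp hs).2
    · intro t ht
      exact Finset.erase_insert (insert_mem_simplices hx ht).2
    · intro s hs
      have hxs : x ∈ s := (Finset.mem_filter.mp hs).2
      rw [Finset.card_erase_of_mem hxs]
  have hsphere : (∑ t ∈ insert (∅ : Finset V) (G.sphere x).simplices, (-1 : ℤ) ^ t.card)
      = 1 - (G.sphere x).euler := by
    rw [Finset.sum_insert (empty_not_mem_simplices _)]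
    simp only [Finset.card_empty, pow_zero]
    congr 1
    rw [euler, ← Finset.sum_neg_distrib]
    refine Finset.sum_congr rfl fun t ht => ?_
    have hpos : 1 ≤ t.card := Finset.card_pos.mpr (mem_simplices.mp ht).1
    obtain ⟨k, hk⟩ : ∃ k, t.card = k + 1 := ⟨t.card - 1, (Nat.succ_pred_eq_of_pos hpos).symm⟩
    rw [hk, pow_succ, Nat.add_sub_cancel]
    ring
  rw [hsplit, hbij, hsphere, hrem]
  ring

/-- Contractible graphs have Euler characteristic `1`. -/
lemma euler_contractible {G : FSGraph V} (h : Contractible G) : G.euler = 1 := by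
  induction h with
  | single G x hG =>
    have hsimp : G.simplices = {{x}} := by
      ext s
      simp only [mem_simplices, Finset.mem_singleton]
      constructor
      · rintro ⟨hne, hsub, -⟩
        rw [hG] at hsub
        rcases Finset.subset_singleton_iff.mp hsub with rfl | h
        · exact absurd hne Finset.not_nonempty_empty
        · exact h
      · rintro rfl
        refine ⟨⟨x, Finset.mem_singleton_self x⟩, by simp [hG], ?_⟩
        intro a ha b hb hab
        simp only [Finset.mem_singleton] at ha hb
        exact absurd (ha.trans hb.symm) hab
    simp [euler, hsimp]
  | step G x hx hS hR ihS ihR =>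
    rw [euler_eq_remove_add_one_sub_sphere G hx, ihS, ihR]
    ring

lemma euler_isSphere {d : ℤ} {G : FSGraph V} (hG : IsSphere d G) :
    (G.euler : ℚ) = 1 + (-1 : ℚ) ^ d := by
  induction hG with
  | empty G hG =>
    have hsimp : G.simplices = ∅ := by
      ext s
      simp only [mem_simplices, Finset.notMem_empty, iff_false]
      rintro ⟨hne, hsub, -⟩
      rw [hG, Finset.subset_empty] at hsub
      exact Finset.not_nonempty_empty (hsub ▸ hne)
    simp [euler, hsimp]
  | succ d G hd hne hunit hpunct ih =>
    obtain ⟨x, hx, hcon⟩ := hpunct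
    have hkey := euler_eq_remove_add_one_sub_sphere G hx
    have hrem := euler_contractible hcon
    have hsph := ih x hx
    have hcast : (G.euler : ℚ) = ((G.remove x).euler : ℚ) + 1 - ((G.sphere x).euler : ℚ) := by
      exact_mod_cast congrArg (Int.cast : ℤ → ℚ) hkey
    rw [hcast, hsph, hrem]
    have hpow : (-1 : ℚ) ^ d = (-1 : ℚ) ^ (d - 1) * (-1) := by
      rw [show d = (d - 1) + 1 by ring, zpow_add₀ (by norm_num : (-1 : ℚ) ≠ 0)]
      ring_nf
    push_cast
    rw [hpow]
    ring

end FSGraph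

/-- For every integer `d ≥ 0`, the Euler characteristic of every `d`-sphere equals
`1 + (-1)^d`. -/
theorem euler_characteristic_of_sphere {V : Type} (d : ℤ) (hd : 0 ≤ d)
    (G : FSGraph V) (hG : FSGraph.IsSphere d G) :
    (G.euler : ℚ) = 1 + (-1 : ℚ) ^ d := by
  exact FSGraph.euler_isSphere hG
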